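/- Let (L → M) be a crossed module of groups, let P be a set with a left action of L, and let 𝐦 : P → M be an L-equivariant map, i.e. 𝐦(l·p) = ∂₁(l)·𝐦(p) for all l ∈ L, p ∈ P. Then p·l := (^{𝐦(p)}l)·p defines a right action of L on P; this right action commutes with the left action, i.e. l'·(p·l) = (l'·p)·l for all l, l' ∈ L, p ∈ P; and 𝐦 is L-biequivariant: 𝐦(p·l) = 𝐦(p)·∂₁(l) for all p ∈ P, l ∈ L. -/

import Mathlib

/-- A crossed module `(L → M)`: a group homomorphism `d : L →* M` together with a
left action of `M` on `L` by group automorphisms satisfying the Peiffer condition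
and equivariance. -/
structure CrossedModule (L M : Type*) [Group L] [Group M] where
  d : L →* M
  act : M → L → L
  act_one : ∀ l : L, act 1 l = l
  act_mul : ∀ (m₁ m₂ : M) (l : L), act (m₁ * m₂) l = act m₁ (act m₂ l)
  act_map_mul : ∀ (m : M) (l₁ l₂ : L), act m (l₁ * l₂) = act m l₁ * act m l₂
  peiffer : ∀ l l' : L, act (d l) l' = l * l' * l⁻¹
  equivar : ∀ (m : M) (l : L), d (act m l) = m * d l * m⁻¹

/-- given a crossed module `(L → M)`, a left `L`-set `P` and an
`L`-equivariant map `𝐦 : P → M`, the formula `p·l := (^{𝐦(p)}l)·p` defines a right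
`L`-action on `P` commuting with the left action, and `𝐦` is `L`-biequivariant. -/
theorem statement5 {L M : Type*} [Group L] [Group M] (C : CrossedModule L M)
    {P : Type*} (aP : L → P → P)
    (aP_one : ∀ p : P, aP 1 p = p)
    (aP_mul : ∀ (l l' : L) (p : P), aP (l * l') p = aP l (aP l' p))
    (mm : P → M)
    (mm_equiv : ∀ (l : L) (p : P), mm (aP l p) = C.d l * mm p) :
    ∃ rAct : P → L → P,
      (∀ (p : P) (l : L), rAct p l = aP (C.act (mm p) l) p) ∧
      (∀ p : P, rAct p 1 = p) ∧
      (∀ (p : P) (l l' : L), rAct p (l * l') = rAct (rAct p l) l') ∧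
      (∀ (l l' : L) (p : P), aP l' (rAct p l) = rAct (aP l' p) l) ∧
      (∀ (p : P) (l : L), mm (rAct p l) = mm p * C.d l) := by

  have hone : ∀ m : M, C.act m 1 = 1 := by
    intro m
    have h := C.act_map_mul m 1 1
    rw [mul_one] at h
    exact (mul_eq_left.mp h.symm)
  have hinv : ∀ (m : M) (l : L), C.act m l⁻¹ = (C.act m l)⁻¹ := by
    intro m l
    apply eq_inv_of_mul_eq_one_left
    rw [← C.act_map_mul, inv_mul_cancel, hone]
  refine ⟨fun p l => aP (C.act (mm p) l) p, fun _ _ => rfl, ?_, ?_, ?_, ?_⟩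
  · intro p
    simp only [hone, aP_one]
  · intro p l l'
    simp only [mm_equiv]
    rw [← aP_mul]
    congr 1
    rw [C.equivar]
    have h2 : mm p * C.d l * (mm p)⁻¹ * mm p = mm p * C.d l := by group
    rw [h2, C.act_mul, C.peiffer, C.act_map_mul, C.act_map_mul, hinv]
    rw [← C.act_map_mul]
    group
  · intro l l' p
    simp only [mm_equiv]
    rw [← aP_mul, ← aP_mul, C.act_mul, C.peiffer]
    group
  · intro p l
    simp only [mm_equiv, C.equivar]
    group
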